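/- For every odd d ≥ 3, the function y(t) = m̂*t + 1 - 2((m̂*+1)t + 1)^d with m̂* = -d/(d-1) satisfies y'(t) > 0 for all t ∈ [0, 1/(1 - m̂*)]. -/

import Mathlib

open Set

theorem stmt18 (d : ℕ) (hd : 3 ≤ d) (hodd : Odd d)
    (mstar : ℝ) (hmstar : mstar = -(d : ℝ) / (d - 1))
    (y : ℝ → ℝ) (hy : ∀ t : ℝ, y t = mstar * t + 1 - 2 * ((mstar + 1) * t + 1) ^ d) :
    ∀ t ∈ Icc (0 : ℝ) (1 / (1 - mstar)), 0 < deriv y t := by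
  intro t ht
  have hy' : y = fun t : ℝ => mstar * t + 1 - 2 * ((mstar + 1) * t + 1) ^ d := funext hy
  have hD3 : (3 : ℝ) ≤ (d : ℝ) := by exact_mod_cast hd
  have hD1 : (0 : ℝ) < (d : ℝ) - 1 := by linarith
  have hc : mstar + 1 = -1 / ((d : ℝ) - 1) := by
    rw [hmstar]; field_simp; ring
  have hderiv : HasDerivAt y
      (mstar - 2 * ((d : ℝ) * ((mstar + 1) * t + 1) ^ (d - 1) * (mstar + 1))) t := by
    rw [hy']
    have h1 : HasDerivAt (fun t : ℝ => (mstar + 1) * t + 1) (mstar + 1) t := by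
      simpa using ((hasDerivAt_id t).const_mul (mstar + 1)).add_const 1
    have h2 := h1.pow d
    have h3 : HasDerivAt (fun t : ℝ => mstar * t + 1) mstar t := by
      simpa using ((hasDerivAt_id t).const_mul mstar).add_const 1
    simpa [Pi.sub_def, mul_comm, mul_assoc, mul_left_comm] using h3.sub (h2.const_mul 2)
  rw [hderiv.deriv]
  -- bounds on t
  obtain ⟨ht0, ht1⟩ := ht
  have hub : 1 / (1 - mstar) = ((d : ℝ) - 1) / (2 * d - 1) := by
    have h1m : 1 - mstar = (2 * (d : ℝ) - 1) / ((d : ℝ) - 1) := by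
      rw [hmstar]; field_simp; ring
    rw [h1m, one_div_div]
  have ht1' : t ≤ ((d : ℝ) - 1) / (2 * d - 1) := hub ▸ ht1
  have h2d : (0 : ℝ) < 2 * d - 1 := by linarith
  have htlt : t < 1 / 2 := by
    have : ((d : ℝ) - 1) / (2 * d - 1) < 1 / 2 := by
      rw [div_lt_div_iff₀ h2d (by norm_num)]; linarith
    linarith
  -- Bernoulli
  have hm2 : (-2 : ℝ) ≤ (mstar + 1) * t := by
    rw [hc]
    have h1 : t / ((d : ℝ) - 1) ≤ t := by
      rw [div_le_iff₀ hD1]; nlinarith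
    have h2 : -1 / ((d : ℝ) - 1) * t = -(t / ((d : ℝ) - 1)) := by ring
    rw [h2]; linarith
  have hB := one_add_mul_le_pow hm2 (d - 1)
  have hcast : ((d - 1 : ℕ) : ℝ) = (d : ℝ) - 1 := by
    have : 1 ≤ d := by omega
    push_cast [this]; ring
  rw [hcast] at hB
  -- rewrite (1 + (mstar+1)*t) as u
  have hBu : 1 + ((d : ℝ) - 1) * ((mstar + 1) * t) ≤ ((mstar + 1) * t + 1) ^ (d - 1) := by
    have : (1 + (mstar + 1) * t) = ((mstar + 1) * t + 1) := by ring
    rwa [this] at hB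
  have hKpos : (0 : ℝ) < 2 * (d : ℝ) * (1 / ((d : ℝ) - 1)) := by positivity
  -- multiply hBu by K = -2*d*(mstar+1) = 2d/(d-1) > 0
  have hKval : -2 * (d : ℝ) * (mstar + 1) = 2 * d * (1 / ((d : ℝ) - 1)) := by
    rw [hc]; ring
  have hmul := mul_le_mul_of_nonneg_left hBu (le_of_lt (hKval ▸ hKpos))
  have hlow : mstar + (-2 * (d : ℝ) * (mstar + 1)) * (1 + ((d : ℝ) - 1) * ((mstar + 1) * t))
      = (d : ℝ) * (1 - 2 * t) / ((d : ℝ) - 1) := by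
    rw [hmstar]; field_simp; ring
  have hpos : (0 : ℝ) < (d : ℝ) * (1 - 2 * t) / ((d : ℝ) - 1) := by
    apply div_pos _ hD1
    have : (0 : ℝ) < (d : ℝ) := by linarith
    nlinarith
  nlinarith [hmul, hlow, hpos]
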